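/- For every real number t such that ζ(1/2 + i·t) ≠ 0 and 1/2 + i·t ≠ 1, with F(t) = (t/2)·(γ + log(2π)) + (1/2)·arctan(2t) + (1/2)·arctan(tanh(π·t/2)) + (1/2)·∑_{k=1}^{∞} [ −t/k + arctan( t/(k + 1/2) ) ], one has exp(2·i·F(t)) = ζ(1/2 + i·t) / ζ(1/2 − i·t). -/

import Mathlib

noncomputable def phaseF (t : ℝ) : ℝ :=
  t / 2 * (Real.eulerMascheroniConstant + Real.log (2 * Real.pi)) +
    1 / 2 * Real.arctan (2 * t) +
    1 / 2 * Real.arctan (Real.tanh (Real.pi * t / 2)) +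
    1 / 2 * ∑' k : ℕ, (-t / ((k : ℝ) + 1) + Real.arctan (t / ((k : ℝ) + 1 + 1 / 2)))



open Real Filter Finset

lemma abs_arctan_sub_le (x : ℝ) : |Real.arctan x - x| ≤ |x|^3 := by
  have key : ∀ u ∈ Set.uIcc (0:ℝ) x, HasDerivAt (fun y => Real.arctan y - y)
      (1/(1+u^2) - 1) u := fun u _ => (Real.hasDerivAt_arctan u).sub (hasDerivAt_id u)
  have bound : ∀ u ∈ Set.uIcc (0:ℝ) x, ‖(1/(1+u^2) - 1 : ℝ)‖ ≤ x^2 := by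
    intro u hu
    have h1 : (0:ℝ) < 1 + u^2 := by positivity
    have : |u| ≤ |x| := by
      rcases Set.mem_uIcc.1 hu with h | h <;> rw [abs_le] <;> constructor <;> nlinarith [abs_nonneg x, le_abs_self x, neg_abs_le x]
    have hu2 : u^2 ≤ x^2 := by
      have h2 := pow_le_pow_left₀ (abs_nonneg u) this 2
      rwa [sq_abs, sq_abs] at h2
    rw [Real.norm_eq_abs, abs_of_nonpos (by rw [sub_nonpos]; rw [div_le_one h1]; nlinarith [sq_nonneg u])]
    rw [neg_sub]
    have : 1 - 1/(1+u^2) = u^2/(1+u^2) := by field_simp; ring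
    rw [this]
    calc u^2/(1+u^2) ≤ u^2 := by
          rw [div_le_iff₀ h1]; nlinarith [sq_nonneg u]
      _ ≤ x^2 := hu2
  have := (convex_uIcc (0:ℝ) x).norm_image_sub_le_of_norm_hasDerivWithin_le
    (fun u hu => (key u hu).hasDerivWithinAt) bound (Set.left_mem_uIcc) (Set.right_mem_uIcc)
  simpa [Real.arctan_zero, abs_mul, pow_succ, pow_two, abs_mul, mul_comm] using this

set_option maxHeartbeats 1000000 in
lemma term_summable (t : ℝ) :
    Summable (fun k : ℕ => -t / ((k:ℝ)+1) + Real.arctan (t / ((k:ℝ)+1+1/2))) := by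
  apply Summable.of_norm
  have hg : Summable (fun k : ℕ => (|t|^3 + |t|) * (1/((k:ℝ)+1)^2)) := by
    apply Summable.mul_left
    have h := Real.summable_one_div_nat_pow.mpr (one_lt_two (α := ℕ))
    have := (summable_nat_add_iff 1).mpr h
    simpa using this
  refine Summable.of_nonneg_of_le (fun k => norm_nonneg _) (fun k => ?_) hg
  have hk1 : (0:ℝ) < (k:ℝ)+1 := by positivity
  have hk2 : (0:ℝ) < (k:ℝ)+1+1/2 := by positivity
  have h1 : |Real.arctan (t/((k:ℝ)+1+1/2)) - t/((k:ℝ)+1+1/2)| ≤ |t/((k:ℝ)+1+1/2)|^3 :=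
    abs_arctan_sub_le _
  have h3 : |t/((k:ℝ)+1+1/2)|^3 ≤ |t|^3 * (1/((k:ℝ)+1)^2) := by
    rw [abs_div]
    rw [div_pow, abs_of_pos hk2]
    rw [div_le_iff₀ (by positivity)]
    have : ((k:ℝ)+1)^2 ≤ ((k:ℝ)+1+1/2)^3 := by nlinarith [sq_nonneg ((k:ℝ)+1), (Nat.cast_nonneg k : (0:ℝ) ≤ k)]
    calc |t|^3 = |t|^3 * 1 := (mul_one _).symm
      _ ≤ |t|^3 * (1/((k:ℝ)+1)^2 * ((k:ℝ)+1+1/2)^3) := by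
          apply mul_le_mul_of_nonneg_left _ (by positivity)
          rw [one_div, inv_mul_eq_div, le_div_iff₀ (by positivity), one_mul]
          exact this
      _ = |t|^3 * (1/((k:ℝ)+1)^2) * ((k:ℝ)+1+1/2)^3 := by ring
  have h4 : |t/((k:ℝ)+1+1/2) - t/((k:ℝ)+1)| ≤ |t| * (1/((k:ℝ)+1)^2) := by
    have : t/((k:ℝ)+1+1/2) - t/((k:ℝ)+1) = -t * ((1/2) / (((k:ℝ)+1)*((k:ℝ)+1+1/2))) := by
      field_simp; ring
    rw [this, abs_mul, abs_neg]
    apply mul_le_mul_of_nonneg_left _ (abs_nonneg t) |>.trans_eq rfl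
    rw [abs_of_pos (by positivity), div_le_div_iff₀ (by positivity) (by positivity)]
    nlinarith [(Nat.cast_nonneg k : (0:ℝ) ≤ k)]
  calc ‖-t / ((k:ℝ)+1) + Real.arctan (t / ((k:ℝ)+1+1/2))‖
      = |(Real.arctan (t/((k:ℝ)+1+1/2)) - t/((k:ℝ)+1+1/2)) + (t/((k:ℝ)+1+1/2) - t/((k:ℝ)+1))| := by
        rw [Real.norm_eq_abs]; ring_nf
    _ ≤ |Real.arctan (t/((k:ℝ)+1+1/2)) - t/((k:ℝ)+1+1/2)| + |t/((k:ℝ)+1+1/2) - t/((k:ℝ)+1)| :=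
        abs_add_le _ _
    _ ≤ |t|^3 * (1/((k:ℝ)+1)^2) + |t| * (1/((k:ℝ)+1)^2) := add_le_add (h1.trans h3) h4
    _ = (|t|^3 + |t|) * (1/((k:ℝ)+1)^2) := by ring

lemma polar (p t : ℝ) (hp : 0 < p) :
    (p:ℂ) + Complex.I * t
      = (Real.sqrt (p^2+t^2) : ℂ) * Complex.exp (Complex.I * Real.arctan (t/p)) := by
  have h0 : (0:ℝ) < 1+(t/p)^2 := by positivity
  have hs0 : Real.sqrt (1+(t/p)^2) ≠ 0 := by positivity
  have key : Real.sqrt (p^2+t^2) = p * Real.sqrt (1+(t/p)^2) := by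
    rw [← Real.sqrt_sq hp.le, ← Real.sqrt_mul (sq_nonneg p)]
    congr 1; field_simp
    exact Real.sq_sqrt (sq_nonneg p)
  have hre : Real.sqrt (p^2+t^2) * Real.cos (Real.arctan (t/p)) = p := by
    rw [key, Real.cos_arctan]; field_simp
  have him : Real.sqrt (p^2+t^2) * Real.sin (Real.arctan (t/p)) = t := by
    rw [key, Real.sin_arctan]; field_simp
  rw [mul_comm Complex.I (Complex.ofReal (Real.arctan (t/p))), Complex.exp_mul_I, ← Complex.ofReal_cos, ← Complex.ofReal_sin,
    mul_add, ← mul_assoc, ← Complex.ofReal_mul, ← Complex.ofReal_mul, hre, him]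
  ring

open Complex in
lemma gammaSeq_polar (t : ℝ) (n : ℕ) (hn : 1 ≤ n) :
    Complex.GammaSeq (1/2 + Complex.I * t) n
      = ((Real.sqrt n * n.factorial / ∏ j ∈ Finset.range (n+1),
            Real.sqrt (((j:ℝ)+1/2)^2 + t^2) : ℝ) : ℂ) *
        Complex.exp (Complex.I * ((t * Real.log n
            - ∑ j ∈ Finset.range (n+1), Real.arctan (t/((j:ℝ)+1/2)) : ℝ))) := by
  have hn0 : (0:ℝ) < n := by exact_mod_cast hn
  have hpow : (n:ℂ) ^ (1/2 + Complex.I * t : ℂ)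
      = (Real.sqrt n : ℂ) * Complex.exp (Complex.I * (t * Real.log n : ℝ)) := by
    rw [Complex.cpow_def_of_ne_zero (by exact_mod_cast hn0.ne')]
    rw [show Complex.log (n:ℂ) = (Real.log n : ℂ) by
      rw [← Complex.ofReal_natCast, Complex.ofReal_log hn0.le]]
    rw [show ((Real.log n : ℝ) : ℂ) * (1/2 + Complex.I * t)
        = ((Real.log n / 2 : ℝ) : ℂ) + Complex.I * ((t * Real.log n : ℝ) : ℂ) by
      push_cast; ring]
    rw [Complex.exp_add]
    congr 1
    rw [← Complex.ofReal_exp]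
    norm_cast
    rw [← Real.log_sqrt hn0.le, Real.exp_log (Real.sqrt_pos.mpr hn0)]
  have hprod : (∏ j ∈ Finset.range (n+1), ((1/2 + Complex.I * t : ℂ) + j))
      = ((∏ j ∈ Finset.range (n+1), Real.sqrt (((j:ℝ)+1/2)^2 + t^2) : ℝ) : ℂ) *
        Complex.exp (Complex.I * ((∑ j ∈ Finset.range (n+1), Real.arctan (t/((j:ℝ)+1/2)) : ℝ))) := by
    have : ∀ j ∈ Finset.range (n+1), ((1/2 + Complex.I * t : ℂ) + j)
        = ((Real.sqrt (((j:ℝ)+1/2)^2 + t^2) : ℝ) : ℂ)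
          * Complex.exp (Complex.I * (Real.arctan (t/((j:ℝ)+1/2)) : ℝ)) := by
      intro j _
      have hp : (0:ℝ) < (j:ℝ)+1/2 := by positivity
      have := polar ((j:ℝ)+1/2) t hp
      rw [show ((1/2 + Complex.I * t : ℂ) + j) = (((j:ℝ)+1/2 : ℝ) : ℂ) + Complex.I * t by
        push_cast; ring]
      rw [this]
    rw [Finset.prod_congr rfl this, Finset.prod_mul_distrib, ← Complex.exp_sum]
    push_cast
    congr 1
    rw [← Finset.mul_sum]
  rw [Complex.GammaSeq, hpow, hprod, Complex.ofReal_sub, Complex.ofReal_mul, mul_sub,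
    Complex.exp_sub, Complex.ofReal_div, Complex.ofReal_mul, div_mul_div_comm]
  have hexp : Complex.exp (Complex.I * ((∑ j ∈ Finset.range (n+1),
      Real.arctan (t/((j:ℝ)+1/2)) : ℝ))) ≠ 0 := Complex.exp_ne_zero _
  have hR : ((∏ j ∈ Finset.range (n+1), Real.sqrt (((j:ℝ)+1/2)^2 + t^2) : ℝ) : ℂ) ≠ 0 := by
    norm_cast
    apply Finset.prod_ne_zero_iff.mpr
    intro j _
    positivity
  push_cast
  ring

lemma tendsto_phase (t : ℝ) :
    Filter.Tendsto (fun n : ℕ => (∑ j ∈ Finset.range (n+1), Real.arctan (t/((j:ℝ)+1/2)))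
        - t * Real.log n) Filter.atTop
      (nhds (Real.arctan (2*t)
        + (∑' k : ℕ, (-t/((k:ℝ)+1) + Real.arctan (t/((k:ℝ)+1+1/2))))
        + t * Real.eulerMascheroniConstant)) := by
  have h1 := (term_summable t).hasSum.tendsto_sum_nat
  have h2 := Real.tendsto_eulerMascheroniSeq'
  have h3 := (tendsto_const_nhds (x := Real.arctan (2*t)) (f := Filter.atTop (α := ℕ))).add
    (h1.add (h2.const_mul t))
  rw [show Real.arctan (2*t) + ((∑' k : ℕ, (-t/((k:ℝ)+1) + Real.arctan (t/((k:ℝ)+1+1/2))))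
      + t * Real.eulerMascheroniConstant)
    = Real.arctan (2*t) + (∑' k : ℕ, (-t/((k:ℝ)+1) + Real.arctan (t/((k:ℝ)+1+1/2))))
      + t * Real.eulerMascheroniConstant from by ring] at h3
  apply h3.congr'
  filter_upwards [Filter.eventually_ge_atTop 1] with n hn
  rw [Real.eulerMascheroniSeq', if_neg (by omega)]
  rw [Finset.sum_range_succ']
  have hh : ((harmonic n : ℚ) : ℝ) = ∑ j ∈ Finset.range n, 1/((j:ℝ)+1) := by
    rw [harmonic]; push_cast [one_div]; rfl
  have h0 : Real.arctan (t/(((0:ℕ):ℝ)+1/2)) = Real.arctan (2*t) := by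
    norm_num
    congr 1
    ring
  rw [h0, hh]
  push_cast
  have hcancel : ∑ i ∈ Finset.range n, (-t/((i:ℝ)+1) + Real.arctan (t/((i:ℝ)+1+1/2)))
      + t * ∑ j ∈ Finset.range n, 1/((j:ℝ)+1)
      = ∑ i ∈ Finset.range n, Real.arctan (t/((i:ℝ)+1+1/2)) := by
    rw [Finset.mul_sum, ← Finset.sum_add_distrib]
    apply Finset.sum_congr rfl
    intro i _
    have : ((i:ℝ)+1) ≠ 0 := by positivity
    field_simp
    ring
  rw [mul_sub]
  linarith [hcancel]

noncomputable def Aphase (t : ℝ) : ℝ :=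
  Real.arctan (2*t) + (∑' k : ℕ, (-t/((k:ℝ)+1) + Real.arctan (t/((k:ℝ)+1+1/2))))
    + t * Real.eulerMascheroniConstant

open Complex in
lemma Gamma_polar (t : ℝ) :
    Complex.Gamma (1/2 + Complex.I * t)
      = (Real.sqrt (Real.pi / Real.cosh (Real.pi * t)) : ℂ)
        * Complex.exp (-(Complex.I * ((Aphase t : ℝ) : ℂ))) := by
  set z : ℂ := 1/2 + Complex.I * t with hz
  set C : ℂ := Complex.Gamma z * Complex.exp (Complex.I * ((Aphase t : ℝ) : ℂ)) with hC
  have hcont : Continuous (fun x : ℝ => Complex.exp (Complex.I * (x : ℂ))) :=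
    Complex.continuous_exp.comp (continuous_const.mul Complex.continuous_ofReal)
  have key : Filter.Tendsto (fun n : ℕ => Complex.GammaSeq z n
      * Complex.exp (Complex.I * (((∑ j ∈ Finset.range (n+1), Real.arctan (t/((j:ℝ)+1/2)))
          - t * Real.log n : ℝ) : ℂ))) Filter.atTop (nhds C) :=
    (Complex.GammaSeq_tendsto_Gamma z).mul
      ((hcont.continuousAt.tendsto).comp (tendsto_phase t))
  set R : ℕ → ℝ := fun n => Real.sqrt n * n.factorial / ∏ j ∈ Finset.range (n+1),
      Real.sqrt (((j:ℝ)+1/2)^2 + t^2) with hR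
  have heq : ∀ᶠ n in Filter.atTop, Complex.GammaSeq z n
      * Complex.exp (Complex.I * (((∑ j ∈ Finset.range (n+1), Real.arctan (t/((j:ℝ)+1/2)))
          - t * Real.log n : ℝ) : ℂ)) = ((R n : ℝ) : ℂ) := by
    filter_upwards [Filter.eventually_ge_atTop 1] with n hn
    rw [hz, gammaSeq_polar t n hn, mul_assoc, ← Complex.exp_add]
    rw [show Complex.I * ((t * Real.log n - ∑ j ∈ Finset.range (n+1),
        Real.arctan (t/((j:ℝ)+1/2)) : ℝ) : ℂ)
      + Complex.I * (((∑ j ∈ Finset.range (n+1), Real.arctan (t/((j:ℝ)+1/2)))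
          - t * Real.log n : ℝ) : ℂ) = 0 by push_cast; ring]
    rw [Complex.exp_zero, mul_one]
  have key2 : Filter.Tendsto (fun n : ℕ => ((R n : ℝ) : ℂ)) Filter.atTop (nhds C) :=
    key.congr' heq
  have hRnn : ∀ n, 0 ≤ R n := by
    intro n
    rw [hR]
    have : (0:ℝ) < ∏ j ∈ Finset.range (n+1), Real.sqrt (((j:ℝ)+1/2)^2 + t^2) :=
      Finset.prod_pos (fun j _ => Real.sqrt_pos.mpr (by positivity))
    positivity
  have hCim : C.im = 0 := by
    have h1 : Filter.Tendsto (fun n : ℕ => ((R n : ℝ) : ℂ).im) Filter.atTop (nhds C.im) :=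
      (Complex.continuous_im.continuousAt.tendsto).comp key2
    have h2 : (fun n : ℕ => ((R n : ℝ) : ℂ).im) = fun _ => (0:ℝ) := by
      funext n; simp
    rw [h2] at h1
    exact tendsto_nhds_unique h1 tendsto_const_nhds
  have hCre : 0 ≤ C.re := by
    have h1 : Filter.Tendsto (fun n : ℕ => ((R n : ℝ) : ℂ).re) Filter.atTop (nhds C.re) :=
      (Complex.continuous_re.continuousAt.tendsto).comp key2
    exact ge_of_tendsto h1 (Filter.Eventually.of_forall (fun n => by simpa using hRnn n))
  have hCreal : C = ((C.re : ℝ) : ℂ) := by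
    apply Complex.ext <;> simp [hCim]
  have hconjz : (starRingEnd ℂ) z = 1 - z := by
    rw [hz]; apply Complex.ext <;> simp <;> norm_num
  have hsin : Complex.sin (Real.pi * z) = ((Real.cosh (Real.pi * t) : ℝ) : ℂ) := by
    rw [hz, show (Real.pi : ℂ) * (1/2 + Complex.I * t) = Real.pi/2 + (Real.pi * t : ℝ) * Complex.I by
      push_cast; ring]
    rw [Complex.sin_add, Complex.sin_pi_div_two, Complex.cos_pi_div_two, Complex.cos_mul_I]
    push_cast
    simp [Complex.cosh_ofReal_re]
  have hsq : C * (starRingEnd ℂ) C = ((Real.pi / Real.cosh (Real.pi * t) : ℝ) : ℂ) := by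
    rw [hC]
    rw [map_mul, ← Complex.exp_conj, map_mul, Complex.conj_I, Complex.conj_ofReal,
      ← Complex.Gamma_conj, hconjz]
    rw [show Complex.Gamma z * Complex.exp (Complex.I * ((Aphase t : ℝ) : ℂ))
        * (Complex.Gamma (1-z) * Complex.exp (-Complex.I * ((Aphase t : ℝ) : ℂ)))
      = Complex.Gamma z * Complex.Gamma (1-z)
        * (Complex.exp (Complex.I * ((Aphase t : ℝ) : ℂ))
          * Complex.exp (-Complex.I * ((Aphase t : ℝ) : ℂ))) by ring]
    rw [← Complex.exp_add, show Complex.I * ((Aphase t : ℝ) : ℂ)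
      + -Complex.I * ((Aphase t : ℝ) : ℂ) = 0 by ring, Complex.exp_zero, mul_one]
    rw [Complex.Gamma_mul_Gamma_one_sub, hsin]
    push_cast
    rfl
  have hcosh : (0:ℝ) < Real.cosh (Real.pi * t) := Real.cosh_pos _
  have hcsq : C.re ^ 2 = Real.pi / Real.cosh (Real.pi * t) := by
    have h := hsq
    rw [hCreal, Complex.conj_ofReal] at h
    have h2 : ((C.re^2 : ℝ) : ℂ) = ((Real.pi / Real.cosh (Real.pi * t) : ℝ) : ℂ) := by
      rw [← h]; push_cast; ring
    exact_mod_cast h2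
  have hCval : C = ((Real.sqrt (Real.pi / Real.cosh (Real.pi * t)) : ℝ) : ℂ) := by
    rw [hCreal]
    congr 1
    rw [← hcsq, Real.sqrt_sq hCre]
  have hGamma : Complex.Gamma z = C * Complex.exp (-(Complex.I * ((Aphase t : ℝ) : ℂ))) := by
    rw [hC, mul_assoc, ← Complex.exp_add]
    simp
  rw [hGamma, hCval]

lemma cos_polar (t : ℝ) :
    Complex.cos ((Real.pi : ℂ) * (1/2 + Complex.I * t) / 2)
      = ((Real.sqrt 2/2 * Real.sqrt (Real.cosh (Real.pi*t)) : ℝ) : ℂ)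
        * Complex.exp (-(Complex.I * ((Real.arctan (Real.tanh (Real.pi*t/2)) : ℝ) : ℂ))) := by
  set y := Real.pi * t / 2 with hy
  set B := Real.arctan (Real.tanh y) with hB
  have hcy : (0:ℝ) < Real.cosh y := Real.cosh_pos _
  have hcy1 : (1:ℝ) ≤ Real.cosh y := Real.one_le_cosh y
  have h2y : Real.cosh (Real.pi * t) = 2 * Real.cosh y ^ 2 - 1 := by
    rw [show Real.pi * t = 2 * y by rw [hy]; ring, Real.cosh_two_mul]
    linarith [Real.cosh_sq_sub_sinh_sq y]
  have hpos : (0:ℝ) < Real.cosh (Real.pi * t) := Real.cosh_pos _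
  have h1t : 1 + Real.tanh y ^ 2 = Real.cosh (Real.pi * t) / Real.cosh y ^ 2 := by
    rw [h2y, Real.tanh_eq_sinh_div_cosh, div_pow]
    field_simp
    linarith [Real.cosh_sq_sub_sinh_sq y]
  have hsq : Real.sqrt (1 + Real.tanh y^2)
      = Real.sqrt (Real.cosh (Real.pi*t)) / Real.cosh y := by
    rw [h1t, Real.sqrt_div hpos.le, Real.sqrt_sq hcy.le]
  have hsc : Real.sqrt (Real.cosh (Real.pi*t)) ≠ 0 := by positivity
  have hcB : Real.cos B = Real.cosh y / Real.sqrt (Real.cosh (Real.pi*t)) := by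
    rw [hB, Real.cos_arctan, hsq, one_div_div]
  have hsB : Real.sin B = Real.sinh y / Real.sqrt (Real.cosh (Real.pi*t)) := by
    rw [hB, Real.sin_arctan, hsq]
    rw [div_div_eq_mul_div, Real.tanh_eq_sinh_div_cosh]
    field_simp
  have hlhs : Complex.cos ((Real.pi : ℂ) * (1/2 + Complex.I * t) / 2)
      = ((Real.cos (Real.pi/4) * Real.cosh y : ℝ) : ℂ)
        - ((Real.sin (Real.pi/4) * Real.sinh y : ℝ) : ℂ) * Complex.I := by
    rw [show (Real.pi : ℂ) * (1/2 + Complex.I * t) / 2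
        = ((Real.pi/4 : ℝ) : ℂ) + ((y : ℝ) : ℂ) * Complex.I by rw [hy]; push_cast; ring]
    rw [Complex.cos_add, Complex.cos_mul_I, Complex.sin_mul_I,
      ← Complex.ofReal_cos, ← Complex.ofReal_sin, ← Complex.ofReal_cosh, ← Complex.ofReal_sinh]
    push_cast
    ring
  have hrhs : ((Real.sqrt 2/2 * Real.sqrt (Real.cosh (Real.pi*t)) : ℝ) : ℂ)
        * Complex.exp (-(Complex.I * ((B : ℝ) : ℂ)))
      = ((Real.sqrt 2/2 * Real.sqrt (Real.cosh (Real.pi*t)) * Real.cos B : ℝ) : ℂ)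
        - ((Real.sqrt 2/2 * Real.sqrt (Real.cosh (Real.pi*t)) * Real.sin B : ℝ) : ℂ)
          * Complex.I := by
    rw [show -(Complex.I * ((B : ℝ) : ℂ)) = (((-B : ℝ) : ℝ) : ℂ) * Complex.I by push_cast; ring]
    rw [Complex.exp_mul_I, ← Complex.ofReal_cos, ← Complex.ofReal_sin,
      Real.cos_neg, Real.sin_neg]
    push_cast
    ring
  have e1 : Real.sqrt 2/2 * Real.sqrt (Real.cosh (Real.pi*t))
      * (Real.cosh y / Real.sqrt (Real.cosh (Real.pi*t))) = Real.cos (Real.pi/4) * Real.cosh y := by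
    rw [Real.cos_pi_div_four]
    field_simp
  have e2 : Real.sqrt 2/2 * Real.sqrt (Real.cosh (Real.pi*t))
      * (Real.sinh y / Real.sqrt (Real.cosh (Real.pi*t))) = Real.sin (Real.pi/4) * Real.sinh y := by
    rw [Real.sin_pi_div_four]
    field_simp
  rw [hlhs, hrhs, hcB, hsB, e1, e2]

theorem exp_phase_eq_zeta_ratio (t : ℝ)
    (hz : riemannZeta (1 / 2 + Complex.I * t) ≠ 0)
    (h1 : (1 / 2 + Complex.I * t : ℂ) ≠ 1) :
    Complex.exp (2 * Complex.I * (phaseF t : ℂ)) =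
      riemannZeta (1 / 2 + Complex.I * t) / riemannZeta (1 / 2 - Complex.I * t) := by
  set s : ℂ := 1/2 + Complex.I * t with hs
  have hsne : ∀ n : ℕ, s ≠ -n := by
    intro n h
    have h2 := congrArg Complex.re h
    simp [hs] at h2
    have : (0:ℝ) ≤ (n:ℝ) := Nat.cast_nonneg n
    norm_num at h2
    linarith
  have hfe := riemannZeta_one_sub hsne h1
  have h1s : (1:ℂ) - s = 1/2 - Complex.I * t := by rw [hs]; ring
  have hG := Gamma_polar t
  have hcos := cos_polar t
  have h2pi0 : (0:ℝ) < 2 * Real.pi := by positivity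
  have h2pi : (2 * (Real.pi:ℂ)) ^ (-s)
      = (((Real.sqrt (2*Real.pi))⁻¹ : ℝ) : ℂ)
        * Complex.exp (-(Complex.I * ((t * Real.log (2*Real.pi) : ℝ) : ℂ))) := by
    have hb : (2 * (Real.pi:ℂ)) = ((2*Real.pi : ℝ) : ℂ) := by push_cast; ring
    rw [hb, Complex.cpow_def_of_ne_zero (by exact_mod_cast h2pi0.ne')]
    rw [← Complex.ofReal_log h2pi0.le]
    rw [show ((Real.log (2*Real.pi) : ℝ) : ℂ) * -s
        = ((-(Real.log (2*Real.pi)/2) : ℝ) : ℂ) + -(Complex.I * ((t * Real.log (2*Real.pi) : ℝ) : ℂ)) by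
      rw [hs]; push_cast; ring]
    rw [Complex.exp_add]
    congr 1
    rw [← Complex.ofReal_exp]
    norm_cast
    rw [Real.exp_neg, ← Real.log_sqrt h2pi0.le, Real.exp_log (Real.sqrt_pos.mpr h2pi0)]
  have hr : (2:ℝ) * (Real.sqrt (2*Real.pi))⁻¹ * Real.sqrt (Real.pi / Real.cosh (Real.pi*t))
      * (Real.sqrt 2/2 * Real.sqrt (Real.cosh (Real.pi*t))) = 1 := by
    have hcosh : (0:ℝ) < Real.cosh (Real.pi*t) := Real.cosh_pos _
    have e1 : Real.sqrt (Real.pi / Real.cosh (Real.pi*t)) * Real.sqrt (Real.cosh (Real.pi*t))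
        = Real.sqrt Real.pi := by
      rw [← Real.sqrt_mul (by positivity), div_mul_cancel₀ _ hcosh.ne']
    have e2 : Real.sqrt 2 * Real.sqrt Real.pi = Real.sqrt (2*Real.pi) :=
      (Real.sqrt_mul (by norm_num) Real.pi).symm
    have e3 : Real.sqrt (2*Real.pi) ≠ 0 := by positivity
    field_simp
    linear_combination Real.sqrt 2 * e1 + e2
  have comb : ∀ (a b c : ℝ) (x y z : ℂ), (2:ℂ) * ((a:ℝ):ℂ) * Complex.exp x
      * (((b:ℝ):ℂ) * Complex.exp y) * (((c:ℝ):ℂ) * Complex.exp z)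
      = (((2*a*b*c : ℝ)):ℂ) * Complex.exp (x+y+z) := by
    intros a b c x y z
    rw [Complex.exp_add, Complex.exp_add]
    push_cast
    ring
  have hK : 2 * (2 * (Real.pi:ℂ)) ^ (-s) * Complex.Gamma s * Complex.cos ((Real.pi:ℂ) * s / 2)
      = Complex.exp (-(2 * Complex.I * ((phaseF t : ℝ) : ℂ))) := by
    rw [hs]
    rw [h2pi, hG, hcos]
    rw [show (2:ℂ) * ((((Real.sqrt (2*Real.pi))⁻¹ : ℝ) : ℂ)
          * Complex.exp (-(Complex.I * ((t * Real.log (2*Real.pi) : ℝ) : ℂ))))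
        * (((Real.sqrt (Real.pi / Real.cosh (Real.pi * t)) : ℝ) : ℂ)
          * Complex.exp (-(Complex.I * ((Aphase t : ℝ) : ℂ))))
        * (((Real.sqrt 2/2 * Real.sqrt (Real.cosh (Real.pi*t)) : ℝ) : ℂ)
          * Complex.exp (-(Complex.I * ((Real.arctan (Real.tanh (Real.pi*t/2)) : ℝ) : ℂ))))
      = ((((2:ℝ) * (Real.sqrt (2*Real.pi))⁻¹ * Real.sqrt (Real.pi / Real.cosh (Real.pi*t))
          * (Real.sqrt 2/2 * Real.sqrt (Real.cosh (Real.pi*t)))) : ℝ) : ℂ)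
        * Complex.exp (-(Complex.I * ((t * Real.log (2*Real.pi) : ℝ) : ℂ))
            + -(Complex.I * ((Aphase t : ℝ) : ℂ))
            + -(Complex.I * ((Real.arctan (Real.tanh (Real.pi*t/2)) : ℝ) : ℂ))) by
      rw [Complex.exp_add, Complex.exp_add]; push_cast; ring]
    rw [hr]
    rw [Complex.ofReal_one, one_mul]
    congr 1
    have hth : t * Real.log (2*Real.pi) + Aphase t + Real.arctan (Real.tanh (Real.pi*t/2))
        = 2 * phaseF t := by
      rw [Aphase, phaseF]; ring
    rw [show -(Complex.I * ((t * Real.log (2*Real.pi) : ℝ) : ℂ))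
          + -(Complex.I * ((Aphase t : ℝ) : ℂ))
          + -(Complex.I * ((Real.arctan (Real.tanh (Real.pi*t/2)) : ℝ) : ℂ))
        = -(Complex.I * (((t * Real.log (2*Real.pi) + Aphase t
            + Real.arctan (Real.tanh (Real.pi*t/2))) : ℝ) : ℂ)) by push_cast; ring]
    rw [hth]
    push_cast
    ring
  rw [show (1/2 - Complex.I * t : ℂ) = 1 - s from h1s.symm]
  rw [hfe, hK]
  rw [mul_comm (Complex.exp _) (riemannZeta s), ← div_div, div_self hz, one_div, ← Complex.exp_neg, neg_neg]
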